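/- Let m ∈ ℕ with m ≥ 1, let β > 0, and let ν = Gumbel(β) be the Gumbel measure with scale β. Then for every s : Fin m → ℝ and every index i, the probability that candidate i wins Report-Noisy-Max with i.i.d. Gumbel(β) noise is the softmax weight: ν^{⊗m}({η ∈ ℝ^m : ∀ j ≠ i, s(i) + η(i) > s(j) + η(j)}) = exp(s(i)/β) / (∑_{j=1}^m exp(s(j)/β)). -/

import Mathlib

open MeasureTheory

/-- The Gumbel measure `Gumbel(β)` with scale `β`, with density
`x ↦ (1/β)·exp(−x/β − exp(−x/β))` with respect to Lebesgue measure. -/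
noncomputable def gumbelMeasure (β : ℝ) : Measure ℝ :=
  volume.withDensity fun x =>
    ENNReal.ofReal (1 / β * Real.exp (-x / β - Real.exp (-x / β)))

open Real Filter Set Topology Asymptotics

namespace GumbelAux

noncomputable def f (c β x : ℝ) : ℝ := 1/β * exp (-x/β) * exp (-(c * exp (-x/β)))

noncomputable def H (c β x : ℝ) : ℝ := 1/c * exp (-(c * exp (-x/β)))

lemma f_nonneg {β : ℝ} (hβ : 0 < β) (c x : ℝ) : 0 ≤ f c β x := by
  unfold f
  positivity

lemma f_cont (c β : ℝ) : Continuous (f c β) := by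
  unfold f; fun_prop

lemma hasDerivAt_H (c : ℝ) {β : ℝ} (hβ : 0 < β) (hc : c ≠ 0) (x : ℝ) :
    HasDerivAt (H c β) (f c β x) x := by
  have h1 : HasDerivAt (fun x : ℝ => -x/β) (-1/β) x := by
    simpa using ((hasDerivAt_id x).neg.div_const β)
  have h2 : HasDerivAt (fun x : ℝ => exp (-x/β)) (exp (-x/β) * (-1/β)) x := h1.exp
  have h3 : HasDerivAt (fun x : ℝ => -(c * exp (-x/β)))
      (-(c * (exp (-x/β) * (-1/β)))) x := (h2.const_mul c).neg
  have h4 := (h3.exp).const_mul (1/c)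
  refine h4.congr_deriv ?_
  unfold f
  field_simp

lemma tendsto_H_atTop {c β : ℝ} (hβ : 0 < β) :
    Tendsto (H c β) atTop (𝓝 (1/c)) := by
  have h0 : Tendsto (fun x : ℝ => -x/β) atTop atBot := by
    apply Tendsto.atBot_div_const hβ
    exact tendsto_neg_atBot_iff.mpr tendsto_id
  have h1 : Tendsto (fun x : ℝ => exp (-x/β)) atTop (𝓝 0) :=
    Real.tendsto_exp_atBot.comp h0
  have h2 : Tendsto (fun x : ℝ => 1/c * exp (-(c * exp (-x/β)))) atTop
      (𝓝 (1/c * exp (-(c * 0)))) := by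
    exact (((Real.continuous_exp.tendsto _).comp ((h1.const_mul c).neg)).const_mul (1/c))
  unfold H
  simpa using h2

lemma tendsto_H_atBot {c β : ℝ} (hβ : 0 < β) (hc : 0 < c) :
    Tendsto (H c β) atBot (𝓝 0) := by
  have h0 : Tendsto (fun x : ℝ => -x/β) atBot atTop := by
    apply Tendsto.atTop_div_const hβ
    exact tendsto_neg_atTop_iff.mpr tendsto_id
  have h1 : Tendsto (fun x : ℝ => exp (-x/β)) atBot atTop :=
    Real.tendsto_exp_atTop.comp h0
  have h2 : Tendsto (fun x : ℝ => -(c * exp (-x/β))) atBot atBot :=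
    tendsto_neg_atBot_iff.mpr (h1.const_mul_atTop hc)
  have h3 : Tendsto (fun x : ℝ => exp (-(c * exp (-x/β)))) atBot (𝓝 0) :=
    Real.tendsto_exp_atBot.comp h2
  unfold H
  simpa using h3.const_mul (1/c)

lemma f_le {β : ℝ} (hβ : 0 < β) {c : ℝ} (hc : 0 < c) (x : ℝ) :
    f c β x ≤ 1/β * exp (-x/β) := by
  unfold f
  have h1 : exp (-(c * exp (-x/β))) ≤ 1 := by
    rw [exp_le_one_iff]
    have := exp_pos (-x/β)
    nlinarith
  exact mul_le_of_le_one_right (by positivity) h1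

lemma integrableOn_f_Ioi {β : ℝ} (hβ : 0 < β) {c : ℝ} (hc : 0 < c) :
    IntegrableOn (f c β) (Ioi 0) := by
  refine integrable_of_isBigO_exp_neg (one_div_pos.mpr hβ) ((f_cont c β).continuousOn) ?_
  refine IsBigO.of_bound (1/β) (Eventually.of_forall fun x => ?_)
  rw [Real.norm_eq_abs, Real.norm_eq_abs, abs_of_nonneg (f_nonneg hβ c x),
    abs_of_nonneg (exp_pos _).le]
  have := f_le hβ hc x
  rw [neg_div] at this
  calc f c β x ≤ 1/β * exp (-(x/β)) := this
    _ = 1/β * exp (-(1/β) * x) := by ring_nf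

lemma f_neg_le {β : ℝ} (hβ : 0 < β) {c : ℝ} (hc : 0 < c) (x : ℝ) :
    f c β (-x) ≤ (2/(β*c) * exp (-c/2)) * exp (-(c/(2*β)) * x) := by
  unfold f
  have hu : exp (-(-x)/β) = exp (x/β) := by ring_nf
  rw [hu]
  set t := exp (x/β) with ht
  have htpos : 0 < t := exp_pos _
  have h1 : c*t/2 ≤ exp (c*t/2) := by
    have := Real.add_one_le_exp (c*t/2); linarith
  have h2 : t ≤ (2/c) * exp (c*t/2) := by
    rw [div_mul_eq_mul_div, le_div_iff₀ hc]
    linarith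
  have h3 : 1 + x/β ≤ t := by
    have := Real.add_one_le_exp (x/β); linarith
  have h4 : exp (-(c*t)) = exp (-(c*t/2)) * exp (-(c*t/2)) := by
    rw [← exp_add]; ring_nf
  have h5 : exp (-(c*t/2)) ≤ exp (-c/2 + (-(c/(2*β)) * x)) := by
    apply exp_le_exp.mpr
    have : -(c*t/2) ≤ -(c*(1 + x/β)/2) := by nlinarith
    calc -(c*t/2) ≤ -(c*(1 + x/β)/2) := this
      _ = -c/2 + (-(c/(2*β)) * x) := by field_simp; ring
  calc 1/β * t * exp (-(c*t))
      = 1/β * (t * exp (-(c*t/2))) * exp (-(c*t/2)) := by rw [h4]; ring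
    _ ≤ 1/β * ((2/c) * exp (c*t/2) * exp (-(c*t/2))) * exp (-(c*t/2)) := by
        gcongr
    _ = 1/β * (2/c) * exp (-(c*t/2)) := by
        have he : exp (c*t/2) * exp (-(c*t/2)) = 1 := by
          rw [← exp_add, add_neg_cancel, exp_zero]
        linear_combination (1/β * (2/c) * exp (-(c*t/2))) * he
    _ ≤ 1/β * (2/c) * exp (-c/2 + (-(c/(2*β)) * x)) := by
        gcongr
    _ = (2/(β*c) * exp (-c/2)) * exp (-(c/(2*β)) * x) := by
        rw [exp_add]; field_simp

lemma integrable_f {β : ℝ} (hβ : 0 < β) {c : ℝ} (hc : 0 < c) :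
    Integrable (f c β) := by
  rw [← integrableOn_univ, ← Set.Iic_union_Ioi (a := (0:ℝ)), integrableOn_union]
  constructor
  · rw [← (Measure.measurePreserving_neg (volume : Measure ℝ)).integrableOn_comp_preimage
      (Homeomorph.neg ℝ).measurableEmbedding]
    simp only [Function.comp_def, neg_preimage, neg_Iic, neg_zero]
    have hint : IntegrableOn (fun x : ℝ => (2/(β*c) * exp (-c/2)) * exp (-(c/(2*β)) * x))
        (Ici 0) := by
      rw [integrableOn_Ici_iff_integrableOn_Ioi]
      exact (exp_neg_integrableOn_Ioi 0 (by positivity)).const_mul _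
    refine Integrable.mono' hint ?_ ?_
    · exact (((f_cont c β).comp continuous_neg).aestronglyMeasurable)
    · filter_upwards [ae_restrict_mem measurableSet_Ici] with x _
      rw [Real.norm_eq_abs, abs_of_nonneg (f_nonneg hβ c _)]
      exact f_neg_le hβ hc x
  · exact integrableOn_f_Ioi hβ hc

lemma integral_f {β : ℝ} (hβ : 0 < β) {c : ℝ} (hc : 0 < c) : ∫ x, f c β x = 1/c := by
  have := integral_of_hasDerivAt_of_tendsto (hasDerivAt_H c hβ hc.ne')
    (integrable_f hβ hc) (tendsto_H_atBot hβ hc) (tendsto_H_atTop hβ)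
  simpa using this

lemma lintegral_f {β : ℝ} (hβ : 0 < β) {c : ℝ} (hc : 0 < c) :
    ∫⁻ x, ENNReal.ofReal (f c β x) = ENNReal.ofReal (1/c) := by
  rw [← ofReal_integral_eq_lintegral_ofReal (integrable_f hβ hc)
    (Eventually.of_forall (f_nonneg hβ c)), integral_f hβ hc]

lemma density_eq (β x : ℝ) :
    1 / β * Real.exp (-x / β - Real.exp (-x / β)) = f 1 β x := by
  unfold f
  rw [Real.exp_sub, Real.exp_neg, one_mul]
  field_simp

/-- CDF of the Gumbel measure. -/
lemma gumbel_Iio {β : ℝ} (hβ : 0 < β) (t : ℝ) :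
    gumbelMeasure β (Iio t) = ENNReal.ofReal (exp (-(exp (-t/β)))) := by
  rw [gumbelMeasure, withDensity_apply _ measurableSet_Iio]
  simp_rw [density_eq]
  rw [Measure.restrict_congr_set Iio_ae_eq_Iic]
  have hint : IntegrableOn (f 1 β) (Iic t) := (integrable_f hβ one_pos).integrableOn
  rw [← ofReal_integral_eq_lintegral_ofReal hint
    (Eventually.of_forall (f_nonneg hβ 1))]
  congr 1
  have := integral_Iic_of_hasDerivAt_of_tendsto' (a := t)
    (fun x _ => hasDerivAt_H 1 hβ one_ne_zero x) hint (tendsto_H_atBot hβ one_pos)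
  rw [this]
  unfold H
  simp

end GumbelAux

instance (β : ℝ) : SigmaFinite (gumbelMeasure β) := by
  unfold gumbelMeasure; infer_instance

open GumbelAux

/-- The Gumbel-max trick: the probability that candidate `i` wins Report-Noisy-Max with
i.i.d. `Gumbel(β)` noise is the softmax weight `exp(s(i)/β) / ∑_j exp(s(j)/β)`. -/
theorem gumbel_max_softmax (m : ℕ) (hm : 1 ≤ m) (β : ℝ) (hβ : 0 < β)
    (s : Fin m → ℝ) (i : Fin m) :
    (Measure.pi fun _ : Fin m => gumbelMeasure β)
        {η : Fin m → ℝ | ∀ j, j ≠ i → s i + η i > s j + η j} =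
      ENNReal.ofReal (Real.exp (s i / β) / ∑ j, Real.exp (s j / β)) := by
  obtain ⟨n, rfl⟩ : ∃ n, m = n + 1 := ⟨m - 1, (Nat.succ_pred_eq_of_pos hm).symm⟩
  set c : ℝ := ∑ j, Real.exp ((s j - s i)/β) with hc
  have hcpos : 0 < c :=
    Finset.sum_pos (fun j _ => exp_pos _) ⟨i, Finset.mem_univ i⟩
  set ν := gumbelMeasure β with hν
  -- measurability of the winning set
  have hS : MeasurableSet {η : Fin (n+1) → ℝ | ∀ j, j ≠ i → s i + η i > s j + η j} := by
    have : {η : Fin (n+1) → ℝ | ∀ j, j ≠ i → s i + η i > s j + η j}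
        = ⋂ j, ⋂ (_ : j ≠ i), {η | s j + η j < s i + η i} := by
      ext η; simp only [Set.mem_setOf_eq, Set.mem_iInter]
    rw [this]
    exact MeasurableSet.iInter fun j => MeasurableSet.iInter fun _ =>
      measurableSet_lt (measurable_const.add (measurable_pi_apply j))
        (measurable_const.add (measurable_pi_apply i))
  -- transfer to a product measure
  set e := MeasurableEquiv.piFinSuccAbove (fun _ : Fin (n+1) => ℝ) i with he
  have key := ((measurePreserving_piFinSuccAbove (fun _ : Fin (n+1) => ν) i).symm)
    |>.measure_preimage hS.nullMeasurableSet
  rw [← key]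
  -- describe the preimage
  have hpre : e.symm ⁻¹' {η : Fin (n+1) → ℝ | ∀ j, j ≠ i → s i + η i > s j + η j}
      = {p : ℝ × (Fin n → ℝ) | ∀ k, p.2 k < p.1 + s i - s (i.succAbove k)} := by
    ext ⟨x, y⟩
    have hey : e.symm (x, y) = i.insertNth x y := rfl
    simp only [Set.mem_preimage, Set.mem_setOf_eq, hey]
    constructor
    · intro h k
      have := h (i.succAbove k) (Fin.succAbove_ne i k)
      rw [Fin.insertNth_apply_same, Fin.insertNth_apply_succAbove] at this
      linarith
    · intro h j hj
      rcases Fin.exists_succAbove_eq hj with ⟨k, rfl⟩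
      have := h k
      rw [Fin.insertNth_apply_same, Fin.insertNth_apply_succAbove]
      linarith
  rw [hpre]
  -- measurability of the preimage set
  have hT : MeasurableSet {p : ℝ × (Fin n → ℝ) | ∀ k, p.2 k < p.1 + s i - s (i.succAbove k)} := by
    have : {p : ℝ × (Fin n → ℝ) | ∀ k, p.2 k < p.1 + s i - s (i.succAbove k)}
        = ⋂ k, {p : ℝ × (Fin n → ℝ) | p.2 k < p.1 + s i - s (i.succAbove k)} := by
      ext p; simp only [Set.mem_setOf_eq, Set.mem_iInter]
    rw [this]
    exact MeasurableSet.iInter fun k =>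
      measurableSet_lt (by fun_prop) (by fun_prop)
  rw [Measure.prod_apply hT]
  -- compute the slices
  have hslice : ∀ x : ℝ, (Measure.pi fun _ : Fin n => ν)
      (Prod.mk x ⁻¹' {p : ℝ × (Fin n → ℝ) | ∀ k, p.2 k < p.1 + s i - s (i.succAbove k)})
      = ∏ k : Fin n, ENNReal.ofReal (exp (-(exp (-(x + s i - s (i.succAbove k))/β)))) := by
    intro x
    have : Prod.mk x ⁻¹' {p : ℝ × (Fin n → ℝ) | ∀ k, p.2 k < p.1 + s i - s (i.succAbove k)}
        = Set.pi Set.univ (fun k => Iio (x + s i - s (i.succAbove k))) := by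
      ext y; simp [Set.mem_pi]
    rw [this, Measure.pi_pi]
    exact Finset.prod_congr rfl fun k _ => gumbel_Iio hβ _
  simp_rw [hslice]
  -- unfold the Gumbel measure as a density
  have hgmeas : Measurable fun x : ℝ =>
      ∏ k : Fin n, ENNReal.ofReal (exp (-(exp (-(x + s i - s (i.succAbove k))/β)))) := by
    exact Finset.measurable_prod _ fun k _ =>
      ENNReal.measurable_ofReal.comp (by fun_prop)
  have hdmeas : Measurable fun x : ℝ =>
      ENNReal.ofReal (1 / β * Real.exp (-x / β - Real.exp (-x / β))) :=
    ENNReal.measurable_ofReal.comp (by fun_prop)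
  rw [hν, gumbelMeasure, lintegral_withDensity_eq_lintegral_mul _ hdmeas hgmeas]
  -- pointwise identification with f c β
  have hpoint : ∀ x : ℝ,
      ((fun x => ENNReal.ofReal (1 / β * Real.exp (-x / β - Real.exp (-x / β)))) *
        fun x => ∏ k : Fin n, ENNReal.ofReal (exp (-(exp (-(x + s i - s (i.succAbove k))/β))))) x
      = ENNReal.ofReal (f c β x) := by
    intro x
    simp only [Pi.mul_apply]
    rw [← ENNReal.ofReal_prod_of_nonneg (fun k _ => (exp_pos _).le),
      ← ENNReal.ofReal_mul (by positivity)]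
    congr 1
    rw [density_eq]
    unfold f
    rw [← Real.exp_sum]
    have hterm : ∀ k : Fin n, -(exp (-(x + s i - s (i.succAbove k))/β))
        = -(exp (-x/β) * exp ((s (i.succAbove k) - s i)/β)) := by
      intro k
      rw [← Real.exp_add]
      congr 2
      ring
    simp_rw [hterm]
    rw [mul_assoc, ← Real.exp_add]
    congr 1
    have hsum : c = 1 + ∑ k : Fin n, exp ((s (i.succAbove k) - s i)/β) := by
      rw [hc, Fin.sum_univ_succAbove (fun j => exp ((s j - s i)/β)) i]
      simp
    have hms : ∑ k : Fin n, -(exp (-x/β) * exp ((s (i.succAbove k) - s i)/β))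
        = -(exp (-x/β) * ∑ k : Fin n, exp ((s (i.succAbove k) - s i)/β)) := by
      rw [Finset.mul_sum, ← Finset.sum_neg_distrib]
    rw [hms, hsum]
    set u := exp (-x/β) with hu
    set S := ∑ k : Fin n, exp ((s (i.succAbove k) - s i)/β) with hS2
    congr 1
    ring
  simp_rw [hpoint]
  rw [lintegral_f hβ hcpos]
  congr 1
  have hce : c = (∑ j, Real.exp (s j / β)) / Real.exp (s i / β) := by
    rw [hc, Finset.sum_div]
    refine Finset.sum_congr rfl fun j _ => ?_
    rw [← Real.exp_sub]
    congr 1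
    ring
  rw [hce, one_div_div]
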